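/- For every unsatisfiable hitting clause-set F one has Σ_{C ∈ F} 2^(n(F) − |C|) = 2^(n(F)) (equivalently, Σ_{C ∈ F} 2^(−|C|) = 1). -/

import Mathlib

/-- A clause: a finite set of nonzero integers (literals) that is clash-free. -/
def IsClause (C : Finset ℤ) : Prop := (0 : ℤ) ∉ C ∧ ∀ x ∈ C, -x ∉ C

/-- A clause-set: a finite set of clauses. -/
def IsClauseSet (F : Finset (Finset ℤ)) : Prop := ∀ C ∈ F, IsClause C

/-- The variables of a clause: the absolute values of its literals. -/
def clauseVar (C : Finset ℤ) : Finset ℕ := C.image Int.natAbs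

/-- The variables of a clause-set. -/
def var (F : Finset (Finset ℤ)) : Finset ℕ := F.biUnion clauseVar

/-- The number of variables `n(F)`. -/
def numVar (F : Finset (Finset ℤ)) : ℕ := (var F).card

/-- The deficiency `δ(F) = c(F) - n(F)`. -/
def deficiency (F : Finset (Finset ℤ)) : ℤ := (F.card : ℤ) - (numVar F : ℤ)

/-- `F` is satisfiable iff some clause `C` intersects every clause of `F`. -/
def Satisfiable (F : Finset (Finset ℤ)) : Prop :=
  ∃ C : Finset ℤ, IsClause C ∧ ∀ D ∈ F, (C ∩ D).Nonempty

/-- `F` is hitting iff any two distinct clauses of `F` clash. -/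
def Hitting (F : Finset (Finset ℤ)) : Prop :=
  ∀ C ∈ F, ∀ D ∈ F, C ≠ D → ∃ x ∈ C, -x ∈ D

/-- `F` is minimally unsatisfiable. -/
def MinUnsat (F : Finset (Finset ℤ)) : Prop :=
  ¬ Satisfiable F ∧ ∀ G ⊂ F, Satisfiable G

/-- The number of full clauses of `F`. -/
def nfc (F : Finset (Finset ℤ)) : ℕ :=
  (F.filter (fun C => clauseVar C = var F)).card

/-- The degree of a variable `v` in `F`. -/
def vdeg (F : Finset (Finset ℤ)) (v : ℕ) : ℕ :=
  (F.filter (fun C => v ∈ clauseVar C)).card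

/-- The minimal variable-degree of `F` (for `n(F) > 0`). -/
noncomputable def minVarDeg (F : Finset (Finset ℤ)) : ℕ :=
  sInf {d : ℕ | ∃ v ∈ var F, vdeg F v = d}

/-! ### Auxiliary machinery: assignments as subsets of variables -/

/-- A literal is true under assignment `S` (a set of variables set to true). -/
def litTrue (S : Finset ℕ) (x : ℤ) : Prop := if 0 < x then x.natAbs ∈ S else x.natAbs ∉ S

instance (S : Finset ℕ) (x : ℤ) : Decidable (litTrue S x) := by unfold litTrue; infer_instance

/-- `S` falsifies the clause `C`. -/
def falsifies (S : Finset ℕ) (C : Finset ℤ) : Prop := ∀ x ∈ C, ¬ litTrue S x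

instance (S : Finset ℕ) (C : Finset ℤ) : Decidable (falsifies S C) := by
  unfold falsifies; infer_instance

/-- The variables occurring negatively in `C`. -/
def negVars (C : Finset ℤ) : Finset ℕ := (C.filter (fun x => x < 0)).image Int.natAbs

lemma litTrue_neg (S : Finset ℕ) (x : ℤ) (hx : x ≠ 0) : litTrue S (-x) ↔ ¬ litTrue S x := by
  unfold litTrue
  rcases lt_trichotomy x 0 with h | h | h
  · simp [h, not_lt.mpr h.le, Int.neg_pos.mpr h, not_lt_of_gt h]
  · exact absurd h hx
  · have : ¬ 0 < -x := by omega
    simp [h, this, h.le]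

lemma card_clauseVar (C : Finset ℤ) (hC : IsClause C) : (clauseVar C).card = C.card := by
  apply Finset.card_image_of_injOn
  intro x hx y hy hxy
  rcases Int.natAbs_eq_natAbs_iff.mp hxy with h | h
  · exact h
  · exact absurd (h ▸ hx) (hC.2 y hy)

lemma negVars_subset (C : Finset ℤ) : negVars C ⊆ clauseVar C := by
  intro v hv
  simp only [negVars, Finset.mem_image, Finset.mem_filter] at hv
  obtain ⟨x, ⟨hx, _⟩, rfl⟩ := hv
  exact Finset.mem_image_of_mem _ hx

lemma inter_eq_negVars (S : Finset ℕ) (C : Finset ℤ) (hC : IsClause C)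
    (hfal : falsifies S C) : S ∩ clauseVar C = negVars C := by
  ext v
  simp only [Finset.mem_inter, clauseVar, negVars, Finset.mem_image, Finset.mem_filter]
  constructor
  · rintro ⟨hvS, x, hx, rfl⟩
    refine ⟨x, ⟨hx, ?_⟩, rfl⟩
    by_contra h
    have hxpos : 0 < x := by
      rcases lt_trichotomy x 0 with h' | h' | h'
      · exact absurd h' h
      · exact absurd (h' ▸ hx) hC.1
      · exact h'
    exact hfal x hx (by simpa [litTrue, hxpos] using hvS)
  · rintro ⟨x, ⟨hx, hxneg⟩, rfl⟩
    have := hfal x hx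
    simp only [litTrue, if_neg (not_lt.mpr hxneg.le), not_not] at this
    exact ⟨this, x, hx, rfl⟩

/-- Cardinality of the set of assignments (within `n`) falsifying a clause. -/
lemma card_fals (n : Finset ℕ) (C : Finset ℤ) (hC : IsClause C) (hsub : clauseVar C ⊆ n) :
    (n.powerset.filter (fun S => falsifies S C)).card = 2 ^ (n.card - C.card) := by
  have key : (n.powerset.filter (fun S => falsifies S C)).card
      = ((n \ clauseVar C).powerset).card := by
    apply Finset.card_nbij' (fun S => S \ clauseVar C) (fun T => T ∪ negVars C)
    · intro S hS
      simp only [Finset.mem_coe, Finset.mem_filter, Finset.mem_powerset] at hS ⊢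
      exact Finset.sdiff_subset_sdiff hS.1 (Finset.Subset.refl _)
    · intro T hT
      simp only [Finset.mem_coe, Finset.mem_powerset] at hT
      have hTdisj : Disjoint T (clauseVar C) :=
        Finset.disjoint_of_subset_left hT Finset.sdiff_disjoint
      simp only [Finset.mem_coe, Finset.mem_filter, Finset.mem_powerset]
      constructor
      · exact Finset.union_subset (hT.trans Finset.sdiff_subset)
          ((negVars_subset C).trans hsub)
      · intro x hx hlit
        have hx0 : x ≠ 0 := fun h => hC.1 (h ▸ hx)
        rcases lt_trichotomy x 0 with hneg | h0 | hpos
        · simp only [litTrue, if_neg (not_lt.mpr hneg.le)] at hlit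
          exact hlit (Finset.mem_union_right _ (Finset.mem_image_of_mem _
            (Finset.mem_filter.mpr ⟨hx, hneg⟩)))
        · exact hx0 h0
        · simp only [litTrue, if_pos hpos] at hlit
          rcases Finset.mem_union.mp hlit with h | h
          · exact (Finset.disjoint_left.mp hTdisj h) (Finset.mem_image_of_mem _ hx)
          · simp only [negVars, Finset.mem_image, Finset.mem_filter] at h
            obtain ⟨y, ⟨hy, hyneg⟩, hxy⟩ := h
            have : y = -x := by omega
            exact hC.2 x hx (this ▸ hy)
    · intro S hS
      simp only [Finset.mem_coe, Finset.mem_filter, Finset.mem_powerset] at hS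
      have h := inter_eq_negVars S C hC hS.2
      rw [← h]
      ext v
      simp only [Finset.mem_union, Finset.mem_sdiff, Finset.mem_inter]
      tauto
    · intro T hT
      simp only [Finset.mem_coe, Finset.mem_powerset] at hT
      have hTdisj : Disjoint T (clauseVar C) :=
        Finset.disjoint_of_subset_left hT Finset.sdiff_disjoint
      ext v
      simp only [Finset.mem_sdiff, Finset.mem_union]
      constructor
      · rintro ⟨h | h, hv⟩
        · exact h
        · exact absurd (negVars_subset C h) hv
      · intro hv
        exact ⟨Or.inl hv, Finset.disjoint_left.mp hTdisj hv⟩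
  rw [key, Finset.card_powerset, Finset.card_sdiff_of_subset hsub, card_clauseVar C hC]

lemma var_zero_not_mem (F : Finset (Finset ℤ)) (hF : IsClauseSet F) : (0:ℕ) ∉ var F := by
  intro h
  simp only [var, Finset.mem_biUnion, clauseVar, Finset.mem_image] at h
  obtain ⟨C, hC, x, hx, hx0⟩ := h
  have : x = 0 := by omega
  exact (hF C hC).1 (this ▸ hx)

/-- Every total assignment falsifies some clause of an unsatisfiable `F`. -/
lemma cover (F : Finset (Finset ℤ)) (hF : IsClauseSet F) (hunsat : ¬ Satisfiable F)
    (S : Finset ℕ) : ∃ C ∈ F, falsifies S C := by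
  classical
  set CS : Finset ℤ := (var F).image (fun v => if v ∈ S then (v : ℤ) else -(v : ℤ)) with hCS
  have hmem : ∀ z ∈ CS, ∃ v ∈ var F, z = (if v ∈ S then (v : ℤ) else -(v : ℤ)) := by
    intro z hz
    simp only [hCS, Finset.mem_image] at hz
    obtain ⟨v, hv, rfl⟩ := hz
    exact ⟨v, hv, rfl⟩
  have hnatAbs : ∀ v : ℕ, (if v ∈ S then (v : ℤ) else -(v : ℤ)).natAbs = v := by
    intro v; split <;> simp
  have hclause : IsClause CS := by
    constructor
    · intro h0
      obtain ⟨v, hv, hvz⟩ := hmem 0 h0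
      have : v = 0 := by have h := hnatAbs v; rw [← hvz] at h; simp at h; omega
      exact var_zero_not_mem F hF (this ▸ hv)
    · intro z hz hnz
      obtain ⟨v, hv, hvz⟩ := hmem z hz
      obtain ⟨w, hw, hwz⟩ := hmem (-z) hnz
      have hv' : z.natAbs = v := by rw [hvz]; exact hnatAbs v
      have hw' : z.natAbs = w := by
        rw [show z.natAbs = (-z).natAbs by simp, hwz]; exact hnatAbs w
      have hvw : v = w := hv'.symm.trans hw'
      have heq : -z = z := by rw [hwz, ← hvw, ← hvz]
      have hz0 : z = 0 := by omega
      have : v = 0 := by rw [← hv', hz0]; simp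
      exact var_zero_not_mem F hF (this ▸ hv)
  have h2 : ¬ (∀ D ∈ F, (CS ∩ D).Nonempty) := fun h => hunsat ⟨CS, hclause, h⟩
  push_neg at h2
  obtain ⟨D, hD, hDempty⟩ := h2
  refine ⟨D, hD, ?_⟩
  intro x hx hlit
  have hx0 : x ≠ 0 := fun h => (hF D hD).1 (h ▸ hx)
  have hxvar : x.natAbs ∈ var F :=
    Finset.mem_biUnion.mpr ⟨D, hD, Finset.mem_image_of_mem _ hx⟩
  have hxCS : x ∈ CS := by
    rcases lt_or_gt_of_ne hx0 with hneg | hpos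
    · simp only [litTrue, if_neg (not_lt.mpr hneg.le)] at hlit
      have : (if x.natAbs ∈ S then (x.natAbs : ℤ) else -(x.natAbs : ℤ)) = x := by
        rw [if_neg hlit]; omega
      exact Finset.mem_image.mpr ⟨x.natAbs, hxvar, this⟩
    · simp only [litTrue, if_pos hpos] at hlit
      have : (if x.natAbs ∈ S then (x.natAbs : ℤ) else -(x.natAbs : ℤ)) = x := by
        by_cases h : x.natAbs ∈ S
        · rw [if_pos h]; omega
        · exact absurd h (by simpa using hlit)
      exact Finset.mem_image.mpr ⟨x.natAbs, hxvar, this⟩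
  exact (Finset.not_nonempty_iff_eq_empty.mpr hDempty) ⟨x, Finset.mem_inter.mpr ⟨hxCS, hx⟩⟩

theorem stmt_14 (F : Finset (Finset ℤ)) (hF : IsClauseSet F)
    (hunsat : ¬ Satisfiable F) (hhit : Hitting F) :
    ∑ C ∈ F, 2 ^ (numVar F - C.card) = 2 ^ numVar F := by
  classical
  have hsub : ∀ C ∈ F, clauseVar C ⊆ var F := by
    intro C hC v hv
    exact Finset.mem_biUnion.mpr ⟨C, hC, hv⟩
  have hdisj : ∀ C ∈ (F : Set (Finset ℤ)), ∀ D ∈ (F : Set (Finset ℤ)), C ≠ D →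
      Disjoint ((var F).powerset.filter (fun S => falsifies S C))
               ((var F).powerset.filter (fun S => falsifies S D)) := by
    intro C hC D hD hne
    rw [Finset.disjoint_left]
    intro S hSC hSD
    simp only [Finset.mem_filter] at hSC hSD
    obtain ⟨x, hxC, hxD⟩ := hhit C hC D hD hne
    have hx0 : x ≠ 0 := fun h => (hF C hC).1 (h ▸ hxC)
    have h1 := hSC.2 x hxC
    have h2 := hSD.2 (-x) hxD
    rw [litTrue_neg S x hx0] at h2
    exact h2 h1
  have hcover : (var F).powerset =
      F.biUnion (fun C => (var F).powerset.filter (fun S => falsifies S C)) := by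
    ext S
    simp only [Finset.mem_biUnion, Finset.mem_filter, Finset.mem_powerset]
    constructor
    · intro hS
      obtain ⟨C, hC, hfal⟩ := cover F hF hunsat S
      exact ⟨C, hC, hS, hfal⟩
    · rintro ⟨C, _, hS, _⟩
      exact hS
  calc ∑ C ∈ F, 2 ^ (numVar F - C.card)
      = ∑ C ∈ F, ((var F).powerset.filter (fun S => falsifies S C)).card := by
        refine Finset.sum_congr rfl fun C hC => ?_
        exact (card_fals (var F) C (hF C hC) (hsub C hC)).symm
    _ = (F.biUnion (fun C => (var F).powerset.filter (fun S => falsifies S C))).card :=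
        (Finset.card_biUnion (fun C hC D hD hne => hdisj C hC D hD hne)).symm
    _ = 2 ^ numVar F := by rw [← hcover, Finset.card_powerset]; rfl
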